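/- arXiv:math/0608669 — 4 statements merged into one kernel-verified Lean document; each statement's English description precedes it below -/
import Mathlib

section
/- Let λ ∈ ℂ. Let f₀, f₁, f₂ be tempered distributions on ℝ such that: f₀ is homogeneous of degree λ and f₀ ≠ 0; for every a > 0 and every Schwartz function φ one has ⟨f₁, φ(·/a)⟩ = a^{λ+1}⟨f₁, φ⟩ + a^{λ+1}(log a)⟨f₀, φ⟩ (i.e., f₁ is an associated homogeneous distribution of degree λ and order 1 with component f₀); and suppose H : (0,∞) → ℂ is a function such that for every a > 0 and every Schwartz φ, ⟨f₂, φ(·/a)⟩ = a^{λ+1}⟨f₂, φ⟩ + H(a)⟨f₁, φ⟩. Then H(a) = 0 for all a > 0; in particular f₂ is homogeneous of degree λ. (Hence there exist no associated homogeneous distributions of order k ≥ 2 in the Gel'fand–Shilov sense.) -/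
open MeasureTheory SchwartzMap Complex Finset

noncomputable section

variable {E : Type*} [NormedAddCommGroup E] [NormedSpace ℝ E]

/-- The dilation operator on Schwartz functions: for `a ≠ 0`,
`dilate a φ = fun x => φ (a⁻¹ • x)`, i.e. `x ↦ φ (x / a)` (junk value `0` for `a = 0`). -/
def dilate (a : ℝ) : 𝓢(E, ℂ) →L[ℝ] 𝓢(E, ℂ) :=
  if h : a = 0 then 0 else
    SchwartzMap.compCLM ℝ (g := fun x : E => a⁻¹ • x)
      (by convert (a⁻¹ • ContinuousLinearMap.id ℝ E).hasTemperateGrowth using 1 <;> ext x <;> simp)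
      ⟨1, |a|, fun x => by
        have ha : a ≠ 0 := h
        have h0 : |a| ≠ 0 := abs_ne_zero.mpr ha
        have hx : ‖a⁻¹ • x‖ = |a|⁻¹ * ‖x‖ := by
          rw [norm_smul, norm_inv, Real.norm_eq_abs]
        have key : |a| * (1 + ‖a⁻¹ • x‖) ^ 1 = |a| + ‖x‖ := by
          rw [pow_one, hx, mul_add, mul_one, ← mul_assoc, mul_inv_cancel₀ h0, one_mul]
        calc ‖x‖ ≤ |a| + ‖x‖ := le_add_of_nonneg_left (abs_nonneg a)
          _ = |a| * (1 + ‖a⁻¹ • x‖) ^ 1 := key.symm⟩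

lemma dilate_apply (a : ℝ) (ha : a ≠ 0) (φ : 𝓢(E, ℂ)) (x : E) :
    dilate a φ x = φ (a⁻¹ • x) := by
  simp [dilate, dif_neg ha]

/-- On `ℝ`, `dilate a φ` is the function `x ↦ φ (x / a)`. -/
lemma dilate_apply_real (a : ℝ) (ha : a ≠ 0) (φ : 𝓢(ℝ, ℂ)) (x : ℝ) :
    dilate a φ x = φ (x / a) := by
  rw [dilate_apply a ha, smul_eq_mul, inv_mul_eq_div]

/-- A tempered distribution on `ℝ` is homogeneous of degree `λ` if
`⟨f, φ(·/a)⟩ = a^(λ+1) ⟨f, φ⟩` for all `a > 0` and all Schwartz `φ`. -/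
def IsHomogeneous (lam : ℂ) (f : 𝓢(ℝ, ℂ) →L[ℂ] ℂ) : Prop :=
  ∀ a : ℝ, 0 < a → ∀ φ : 𝓢(ℝ, ℂ), f (dilate a φ) = (a : ℂ) ^ (lam + 1) * f φ

lemma dilate_comp (a b : ℝ) (ha : a ≠ 0) (hb : b ≠ 0) (φ : 𝓢(ℝ, ℂ)) :
    dilate b (dilate a φ) = dilate (a * b) φ := by
  ext x
  rw [dilate_apply_real b hb, dilate_apply_real a ha,
    dilate_apply_real (a * b) (mul_ne_zero ha hb), div_div, mul_comm b a]

/-- if `f₀ ≠ 0` is homogeneous of degree `λ`, `f₁` is an associated homogeneous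
distribution of degree `λ` and order 1 with component `f₀`, and `f₂` satisfies
`⟨f₂, φ(·/a)⟩ = a^(λ+1)⟨f₂, φ⟩ + H(a)⟨f₁, φ⟩` for all `a > 0`, then `H` vanishes on `(0,∞)`
and `f₂` is homogeneous of degree `λ`. -/
theorem stmt_0 (lam : ℂ) (f₀ f₁ f₂ : 𝓢(ℝ, ℂ) →L[ℂ] ℂ)
    (hf₀ : IsHomogeneous lam f₀) (hf₀ne : f₀ ≠ 0)
    (hf₁ : ∀ a : ℝ, 0 < a → ∀ φ : 𝓢(ℝ, ℂ),
      f₁ (dilate a φ) = (a : ℂ) ^ (lam + 1) * f₁ φ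
        + (a : ℂ) ^ (lam + 1) * (Real.log a : ℂ) * f₀ φ)
    (H : ℝ → ℂ)
    (hf₂ : ∀ a : ℝ, 0 < a → ∀ φ : 𝓢(ℝ, ℂ),
      f₂ (dilate a φ) = (a : ℂ) ^ (lam + 1) * f₂ φ + H a * f₁ φ) :
    (∀ a : ℝ, 0 < a → H a = 0) ∧ IsHomogeneous lam f₂ := by
  obtain ⟨φ₀, hφ₀⟩ : ∃ φ, f₀ φ ≠ 0 := by
    by_contra h
    push_neg at h
    exact hf₀ne (by ext φ; simpa using h φ)
  have hmul : ∀ a b : ℝ, 0 ≤ a → 0 ≤ b →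
      ((a * b : ℝ) : ℂ) ^ (lam + 1) = (a : ℂ) ^ (lam + 1) * (b : ℂ) ^ (lam + 1) := by
    intro a b ha hb
    push_cast
    exact Complex.mul_cpow_ofReal_nonneg ha hb _
  have key : ∀ a b : ℝ, 0 < a → 0 < b → ∀ φ : 𝓢(ℝ, ℂ),
      H (a * b) * f₁ φ = (b : ℂ) ^ (lam + 1) * H a * f₁ φ
        + (a : ℂ) ^ (lam + 1) * H b * f₁ φ
        + (a : ℂ) ^ (lam + 1) * (Real.log a : ℂ) * H b * f₀ φ := by
    intro a b ha hb φ
    have h1 := hf₂ (a * b) (mul_pos ha hb) φ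
    have h2 := hf₂ b hb (dilate a φ)
    rw [dilate_comp a b ha.ne' hb.ne'] at h2
    have h3 := hf₂ a ha φ
    have h4 := hf₁ a ha φ
    have hm := hmul a b ha.le hb.le
    linear_combination h2 - h1 + (b : ℂ) ^ (lam + 1) * h3 + H b * h4 - f₂ φ * hm
  have he : (0 : ℝ) < Real.exp 1 := Real.exp_pos 1
  have hloge : Real.log (Real.exp 1) = 1 := Real.log_exp 1
  have hene : ((Real.exp 1 : ℝ) : ℂ) ^ (lam + 1) ≠ 0 := by
    intro h
    rw [Complex.cpow_eq_zero_iff] at h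
    exact he.ne' (by exact_mod_cast h.1)
  have K : ∀ a b : ℝ, 0 < a → 0 < b →
      (a : ℂ) ^ (lam + 1) * (Real.log a : ℂ) * H b * f₀ φ₀
        = (b : ℂ) ^ (lam + 1) * (Real.log b : ℂ) * H a * f₀ φ₀ := by
    intro a b ha hb
    have k1 := key a b ha hb φ₀
    have k2 := key b a hb ha φ₀
    rw [mul_comm b a] at k2
    linear_combination k2 - k1
  have Ke : ∀ b : ℝ, 0 < b →
      ((Real.exp 1 : ℝ) : ℂ) ^ (lam + 1) * H b
        = (b : ℂ) ^ (lam + 1) * (Real.log b : ℂ) * H (Real.exp 1) := by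
    intro b hb
    have h := K (Real.exp 1) b he hb
    rw [hloge, Complex.ofReal_one, mul_one] at h
    have h' : (((Real.exp 1 : ℝ) : ℂ) ^ (lam + 1) * H b) * f₀ φ₀
        = ((b : ℂ) ^ (lam + 1) * (Real.log b : ℂ) * H (Real.exp 1)) * f₀ φ₀ := by
      linear_combination h
    exact mul_right_cancel₀ hφ₀ h'
  have hH0 : ∀ a : ℝ, 0 < a → H a = 0 := by
    intro b hb
    have k := key (Real.exp 1) b he hb φ₀
    rw [hloge, Complex.ofReal_one, mul_one] at k
    have ke := Ke b hb
    have keb := Ke (Real.exp 1 * b) (mul_pos he hb)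
    rw [Real.log_mul he.ne' hb.ne', hloge, Complex.ofReal_add, Complex.ofReal_one] at keb
    have hmeb := hmul (Real.exp 1) b he.le hb.le
    have final : ((Real.exp 1 : ℝ) : ℂ) ^ (lam + 1) * ((Real.exp 1 : ℝ) : ℂ) ^ (lam + 1)
        * H b * f₀ φ₀ = 0 := by
      linear_combination -(((Real.exp 1 : ℝ) : ℂ) ^ (lam + 1)) * k + f₁ φ₀ * keb
        + (1 + (Real.log b : ℂ)) * H (Real.exp 1) * f₁ φ₀ * hmeb
        - ((Real.exp 1 : ℝ) : ℂ) ^ (lam + 1) * f₁ φ₀ * ke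
    simpa [mul_eq_zero, hene, hφ₀] using final
  refine ⟨hH0, fun a ha φ => ?_⟩
  rw [hf₂ a ha φ, hH0 a ha]
  ring

end
end

section
/- Let λ ∈ ℂ, C ∈ ℂ, and let h : (0,∞) → ℂ be differentiable and satisfy h(ab) = b^λ h(a) + a^λ h(b) + C (ab)^λ (log a)(log b) for all a, b > 0. Then h(a) = h′(1) · a^λ log a + (C/2) · a^λ (log a)² for all a > 0. -/
set_option maxHeartbeats 1000000

open Complex

/-- if `h : (0,∞) → ℂ` is differentiable and satisfies
`h(ab) = b^λ h(a) + a^λ h(b) + C (ab)^λ (log a)(log b)` for all `a, b > 0`, then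
`h(a) = h′(1) a^λ log a + (C/2) a^λ (log a)²` for all `a > 0`. -/
theorem stmt_8 (lam : ℂ) (C : ℂ) (h : ℝ → ℂ)
    (hdiff : ∀ a : ℝ, 0 < a → DifferentiableAt ℝ h a)
    (heq : ∀ a b : ℝ, 0 < a → 0 < b →
      h (a * b) = (b : ℂ) ^ lam * h a + (a : ℂ) ^ lam * h b
        + C * ((a : ℝ) * b : ℂ) ^ lam * (Real.log a : ℂ) * (Real.log b : ℂ)) :
    ∀ a : ℝ, 0 < a →
      h a = deriv h 1 * ((a : ℂ) ^ lam * (Real.log a : ℂ))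
        + C / 2 * ((a : ℂ) ^ lam * (Real.log a : ℂ) ^ 2) := by
  have cpow_eq : ∀ x : ℝ, 0 < x → (x : ℂ) ^ lam = Complex.exp (lam * (Real.log x : ℂ)) := by
    intro x hx
    rw [Complex.cpow_def_of_ne_zero (by exact_mod_cast hx.ne'), Complex.ofReal_log hx.le,
      mul_comm]
  have Ederiv : ∀ (c : ℂ) (x : ℝ), 0 < x →
      HasDerivAt (fun y : ℝ => Complex.exp (c * (Real.log y : ℂ)))
        (Complex.exp (c * (Real.log x : ℂ)) * (c * (x⁻¹ : ℝ))) x := by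
    intro c x hx
    have h1 : HasDerivAt (fun y : ℝ => (Real.log y : ℂ)) ((x⁻¹ : ℝ) : ℂ) x :=
      (Real.hasDerivAt_log hx.ne').ofReal_comp
    have h2 := (h1.const_mul c).cexp
    simpa [mul_assoc] using h2
  have h1zero : h 1 = 0 := by
    have := heq 1 1 one_pos one_pos
    simp [Complex.one_cpow] at this
    exact this
  -- the ODE obtained by differentiating in b at b = 1
  have ode : ∀ a : ℝ, 0 < a → (a : ℂ) * deriv h a
      = lam * h a + (a : ℂ) ^ lam * deriv h 1 + C * (a : ℂ) ^ lam * (Real.log a : ℂ) := by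
    intro a ha
    set A : ℂ := (a : ℂ) ^ lam with hA
    have lhs : HasDerivAt (fun b : ℝ => h (a * b)) (a • deriv h a) 1 := by
      have hinner : HasDerivAt (fun b : ℝ => a * b) a 1 := by
        simpa using (hasDerivAt_id (1:ℝ)).const_mul a
      have houter : HasDerivAt h (deriv h a) (a * 1) := by
        rw [mul_one]; exact (hdiff a ha).hasDerivAt
      exact houter.scomp 1 hinner
    set R : ℝ → ℂ := fun b => Complex.exp (lam * (Real.log b : ℂ)) * h a + A * h b
      + C * A * (Real.log a : ℂ) * (Complex.exp (lam * (Real.log b : ℂ)) * (Real.log b : ℂ))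
      with hR
    have hev : (fun b : ℝ => h (a * b)) =ᶠ[nhds 1] R := by
      filter_upwards [eventually_gt_nhds (zero_lt_one)] with b hb
      simp only [hR]
      rw [heq a b ha hb, Complex.mul_cpow_ofReal_nonneg ha.le hb.le, cpow_eq b hb]
      ring
    have Rderiv : HasDerivAt R (lam * h a + A * deriv h 1 + C * A * (Real.log a : ℂ)) 1 := by
      have e1 := Ederiv lam 1 one_pos
      have e2 : HasDerivAt (fun b : ℝ => (Real.log b : ℂ)) ((1 : ℝ) : ℂ) 1 := by
        simpa using (Real.hasDerivAt_log one_ne_zero).ofReal_comp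
      have e3 := e1.mul e2
      have d : HasDerivAt R
          ((Complex.exp (lam * (Real.log (1:ℝ) : ℂ)) * (lam * ((1:ℝ)⁻¹ : ℝ))) * h a
            + A * deriv h 1
            + C * A * (Real.log a : ℂ) *
              ((Complex.exp (lam * (Real.log (1:ℝ) : ℂ)) * (lam * ((1:ℝ)⁻¹ : ℝ))) * (Real.log (1:ℝ) : ℂ)
                + Complex.exp (lam * (Real.log (1:ℝ) : ℂ)) * ((1 : ℝ) : ℂ))) 1 :=
        ((e1.mul_const (h a)).add (((hdiff 1 one_pos).hasDerivAt).const_mul A)).add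
          (e3.const_mul (C * A * (Real.log a : ℂ)))
      simpa using d
    have hder := (lhs.congr_of_eventuallyEq hev.symm).unique Rderiv
    have hsmul : (a • deriv h a) = (a : ℂ) * deriv h a := by
      simp [Complex.real_smul]
    rw [hsmul] at hder
    linear_combination hder
  -- the auxiliary function with zero derivative
  set F : ℝ → ℂ := fun x => h x * Complex.exp (-lam * (Real.log x : ℂ))
      - (deriv h 1 * (Real.log x : ℂ)
        + C / 2 * ((Real.log x : ℂ) * (Real.log x : ℂ))) with hF
  have Fderiv : ∀ x : ℝ, 0 < x → HasDerivAt F 0 x := by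
    intro x hx
    have e1 := Ederiv (-lam) x hx
    have hlog : HasDerivAt (fun y : ℝ => (Real.log y : ℂ)) ((x⁻¹ : ℝ) : ℂ) x :=
      (Real.hasDerivAt_log hx.ne').ofReal_comp
    have d : HasDerivAt F
        ((deriv h x * Complex.exp (-lam * (Real.log x : ℂ))
          + h x * (Complex.exp (-lam * (Real.log x : ℂ)) * (-lam * (x⁻¹ : ℝ))))
          - (deriv h 1 * ((x⁻¹ : ℝ) : ℂ)
            + C / 2 * (((x⁻¹ : ℝ) : ℂ) * (Real.log x : ℂ)
              + (Real.log x : ℂ) * ((x⁻¹ : ℝ) : ℂ)))) x :=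
      (((hdiff x hx).hasDerivAt.mul e1)).sub
        ((hlog.const_mul (deriv h 1)).add ((hlog.mul hlog).const_mul (C / 2)))
    have hxne : (x : ℂ) ≠ 0 := by exact_mod_cast hx.ne'
    have key := ode x hx
    have hEE : Complex.exp (lam * (Real.log x : ℂ)) * Complex.exp (-lam * (Real.log x : ℂ)) = 1 := by
      rw [← Complex.exp_add]; ring_nf; exact Complex.exp_zero
    have hinv : ((x⁻¹ : ℝ) : ℂ) = (x : ℂ)⁻¹ := by push_cast; ring
    have hval : (deriv h x * Complex.exp (-lam * (Real.log x : ℂ))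
          + h x * (Complex.exp (-lam * (Real.log x : ℂ)) * (-lam * (x⁻¹ : ℝ))))
          - (deriv h 1 * ((x⁻¹ : ℝ) : ℂ)
            + C / 2 * (((x⁻¹ : ℝ) : ℂ) * (Real.log x : ℂ)
              + (Real.log x : ℂ) * ((x⁻¹ : ℝ) : ℂ))) = 0 := by
      rw [cpow_eq x hx] at key
      rw [hinv]
      have hxx : (x : ℂ) * (x : ℂ)⁻¹ = 1 := mul_inv_cancel₀ hxne
      linear_combination (Complex.exp (-lam * (Real.log x : ℂ)) * (x : ℂ)⁻¹) * key
        + ((x : ℂ)⁻¹ * (deriv h 1 + C * (Real.log x : ℂ))) * hEE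
        - (deriv h x * Complex.exp (-lam * (Real.log x : ℂ))) * hxx
    rw [hval] at d
    exact d
  have Fconst : ∀ a : ℝ, 0 < a → F a = F 1 := by
    intro a ha
    have hconv : Convex ℝ (Set.Ioi (0:ℝ)) := convex_Ioi 0
    refine hconv.is_const_of_fderivWithin_eq_zero
      (fun x hx => ((Fderiv x hx).differentiableAt).differentiableWithinAt) ?_ ha
      (Set.mem_Ioi.mpr one_pos)
    intro x hx
    rw [fderivWithin_of_isOpen isOpen_Ioi hx, (Fderiv x hx).hasFDerivAt.fderiv]
    ext
    simp
  intro a ha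
  have hFa := Fconst a ha
  have hF1 : F 1 = 0 := by simp [hF, h1zero]
  rw [hF1, hF] at hFa
  simp only at hFa
  have hEE : Complex.exp (lam * (Real.log a : ℂ)) * Complex.exp (-lam * (Real.log a : ℂ)) = 1 := by
    rw [← Complex.exp_add]; ring_nf; exact Complex.exp_zero
  rw [cpow_eq a ha]
  have hsub := sub_eq_zero.mp hFa
  have h2 : h a * (Complex.exp (-lam * (Real.log a : ℂ)) * Complex.exp (lam * (Real.log a : ℂ)))
      = (deriv h 1 * (Real.log a : ℂ) + C / 2 * ((Real.log a : ℂ) * (Real.log a : ℂ)))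
        * Complex.exp (lam * (Real.log a : ℂ)) := by
    rw [← mul_assoc, hsub]
  rw [mul_comm (Complex.exp _) (Complex.exp _), hEE, mul_one] at h2
  rw [h2]; ring
end

section
/- Let k ≥ 1 and let ψ₁, …, ψ_k : ℝ → ℂ be differentiable functions with ψ_r(0) = 0 for all r, and let C_{r,j} ∈ ℂ (for 2 ≤ r ≤ k, 1 ≤ j ≤ r−1) be constants such that ψ₁(ξ+η) = ψ₁(ξ) + ψ₁(η) for all ξ, η ∈ ℝ, and for each 2 ≤ r ≤ k: ψ_r(ξ+η) = ψ_r(ξ) + ψ_r(η) + Σ_{j=1}^{r−1} C_{r,j} ψ_{r−j}(ξ) η^j for all ξ, η ∈ ℝ. Then for each r ∈ {1,…,k} there exist constants A_{r,1}, …, A_{r,r} ∈ ℂ such that ψ_r(ξ) = Σ_{j=1}^{r} A_{r,j} ξ^j for all ξ ∈ ℝ. -/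
open Finset

/-- Two differentiable functions with the same derivative and equal value at `0` agree. -/
lemma eq_of_deriv_eq (f g : ℝ → ℂ) (hf : Differentiable ℝ f)
    (hg : ∀ x, HasDerivAt g (deriv f x) x) (h0 : f 0 = g 0) : ∀ x, f x = g x := by
  have hgd : Differentiable ℝ g := fun x => (hg x).differentiableAt
  have hsub : Differentiable ℝ (f - g) := hf.sub hgd
  have hz : ∀ x, deriv (f - g) x = 0 := by
    intro x
    have h := ((hf x).hasDerivAt.sub (hg x)).deriv
    simpa using h
  intro x
  have h := is_const_of_deriv_eq_zero hsub hz x 0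
  have h' : f x - g x = f 0 - g 0 := by simpa using h
  have := h0
  linear_combination h' + this

/-- if `ψ₁, …, ψ_k : ℝ → ℂ` are differentiable, vanish at `0`, `ψ₁` is
additive and `ψ_r(ξ+η) = ψ_r(ξ) + ψ_r(η) + ∑_{j=1}^{r−1} C_{r,j} ψ_{r−j}(ξ) η^j`
for `2 ≤ r ≤ k`, then each `ψ_r` is a polynomial `∑_{j=1}^{r} A_{r,j} ξ^j`. -/
theorem stmt_10 (k : ℕ) (hk : 1 ≤ k) (ψ : ℕ → ℝ → ℂ) (C : ℕ → ℕ → ℂ)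
    (hdiff : ∀ r, 1 ≤ r → r ≤ k → Differentiable ℝ (ψ r))
    (hzero : ∀ r, 1 ≤ r → r ≤ k → ψ r 0 = 0)
    (h1 : ∀ ξ η : ℝ, ψ 1 (ξ + η) = ψ 1 ξ + ψ 1 η)
    (hr : ∀ r, 2 ≤ r → r ≤ k → ∀ ξ η : ℝ,
      ψ r (ξ + η) = ψ r ξ + ψ r η
        + ∑ j ∈ Finset.Icc 1 (r - 1), C r j * ψ (r - j) ξ * (η : ℂ) ^ j) :
    ∀ r, 1 ≤ r → r ≤ k → ∃ A : ℕ → ℂ, ∀ ξ : ℝ,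
      ψ r ξ = ∑ j ∈ Finset.Icc 1 r, A j * (ξ : ℂ) ^ j := by
  intro r hr1 hrk
  set d : ℕ → ℂ := fun s => deriv (ψ s) 0 with hd
  -- a unified functional equation (for r = 1 the sum is empty)
  have heq : ∀ ξ η : ℝ, ψ r (ξ + η) = ψ r ξ + ψ r η
      + ∑ j ∈ Finset.Icc 1 (r - 1), C r j * ψ (r - j) ξ * (η : ℂ) ^ j := by
    rcases eq_or_lt_of_le hr1 with h | h
    · intro ξ η
      simp [← h, h1 ξ η]
    · exact hr r h hrk
  -- differentiability facts for the indices appearing in the sum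
  have hmem : ∀ j ∈ Finset.Icc 1 (r - 1), 1 ≤ r - j ∧ r - j ≤ k := by
    intro j hj
    rw [Finset.mem_Icc] at hj
    omega
  -- derivative formula
  have hderiv : ∀ η : ℝ, deriv (ψ r) η
      = d r + ∑ j ∈ Finset.Icc 1 (r - 1), C r j * d (r - j) * (η : ℂ) ^ j := by
    intro η
    -- derivative in ξ at ξ = 0 of both sides
    have hL : HasDerivAt (fun ξ : ℝ => ψ r (ξ + η)) (deriv (ψ r) (0 + η)) 0 :=
      HasDerivAt.comp_add_const 0 η ((hdiff r hr1 hrk (0 + η)).hasDerivAt)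
    have hR : HasDerivAt
        (fun ξ : ℝ => ψ r ξ + ψ r η
          + ∑ j ∈ Finset.Icc 1 (r - 1), C r j * ψ (r - j) ξ * (η : ℂ) ^ j)
        (deriv (ψ r) 0 + ∑ j ∈ Finset.Icc 1 (r - 1),
          C r j * deriv (ψ (r - j)) 0 * (η : ℂ) ^ j) 0 := by
      have hsum : HasDerivAt
          (fun ξ : ℝ => ∑ j ∈ Finset.Icc 1 (r - 1), C r j * ψ (r - j) ξ * (η : ℂ) ^ j)
          (∑ j ∈ Finset.Icc 1 (r - 1), C r j * deriv (ψ (r - j)) 0 * (η : ℂ) ^ j) 0 := by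
        refine HasDerivAt.fun_sum fun j hj => ?_
        obtain ⟨hj1, hjk⟩ := hmem j hj
        exact (((hdiff (r - j) hj1 hjk 0).hasDerivAt.const_mul (C r j)).mul_const
          ((η : ℂ) ^ j))
      simpa using (((hdiff r hr1 hrk 0).hasDerivAt.add_const (ψ r η)).fun_add hsum)
    have hfun : (fun ξ : ℝ => ψ r (ξ + η))
        = (fun ξ : ℝ => ψ r ξ + ψ r η
          + ∑ j ∈ Finset.Icc 1 (r - 1), C r j * ψ (r - j) ξ * (η : ℂ) ^ j) :=
      funext fun ξ => heq ξ η
    have huniq := (hfun ▸ hL).unique hR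
    simpa [hd] using huniq
  -- the candidate coefficients
  refine ⟨fun j => if j = 1 then d r else C r (j - 1) * d (r - (j - 1)) / (j : ℂ), ?_⟩
  set A : ℕ → ℂ := fun j => if j = 1 then d r else C r (j - 1) * d (r - (j - 1)) / (j : ℂ)
    with hA
  set g : ℝ → ℂ := fun ξ => ∑ j ∈ Finset.Icc 1 r, A j * (ξ : ℂ) ^ j with hg
  have hgderiv : ∀ ξ : ℝ, HasDerivAt g (deriv (ψ r) ξ) ξ := by
    intro ξ
    have hgd : HasDerivAt g
        (∑ j ∈ Finset.Icc 1 r, A j * ((j : ℂ) * (ξ : ℂ) ^ (j - 1))) ξ := by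
      refine HasDerivAt.fun_sum fun j hj => ?_
      exact ((hasDerivAt_pow j (ξ : ℂ)).comp_ofReal).const_mul (A j)
    have hval : ∑ j ∈ Finset.Icc 1 r, A j * ((j : ℂ) * (ξ : ℂ) ^ (j - 1))
        = deriv (ψ r) ξ := by
      rw [hderiv ξ]
      -- split off the j = 1 term
      have h1mem : (1 : ℕ) ∈ Finset.Icc 1 r := Finset.mem_Icc.mpr ⟨le_rfl, hr1⟩
      rw [← Finset.add_sum_erase _ _ h1mem, Finset.Icc_erase_left, ← Finset.Icc_add_one_left_eq_Ioc,
        show (1 + 1 : ℕ) = 2 from rfl]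
      have hre : Finset.Icc 2 r = (Finset.Icc 1 (r - 1)).map (addRightEmbedding 1) := by
        rw [Finset.map_add_right_Icc]
        congr 1
        omega
      rw [hre, Finset.sum_map]
      have hterm : ∀ i ∈ Finset.Icc 1 (r - 1),
          A (addRightEmbedding 1 i) * (((addRightEmbedding 1 i : ℕ) : ℂ)
            * (ξ : ℂ) ^ (addRightEmbedding 1 i - 1))
          = C r i * d (r - i) * (ξ : ℂ) ^ i := by
        intro i hi
        rw [Finset.mem_Icc] at hi
        have hi1 : i + 1 ≠ 1 := by omega
        have hne : ((i : ℂ) + 1) ≠ 0 := by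
          have : ((i + 1 : ℕ) : ℂ) ≠ 0 := Nat.cast_ne_zero.mpr (by omega)
          simpa using this
        simp only [addRightEmbedding_apply, hA, if_neg hi1, Nat.add_sub_cancel]
        push_cast
        field_simp
      rw [Finset.sum_congr rfl hterm]
      simp [hA]
    rwa [hval] at hgd
  have h0 : ψ r 0 = g 0 := by
    rw [hzero r hr1 hrk, hg]
    simp only
    rw [eq_comm]
    refine Finset.sum_eq_zero fun j hj => ?_
    rw [Finset.mem_Icc] at hj
    simp [zero_pow (by omega : j ≠ 0)]
  exact eq_of_deriv_eq (ψ r) g (hdiff r hr1 hrk) hgderiv h0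
end

section
/- Let λ ∈ ℂ, k ≥ 1, and let h₁, …, h_k : (0,∞) → ℂ be differentiable functions and C_{r,j} ∈ ℂ (for 2 ≤ r ≤ k, 1 ≤ j ≤ r−1) constants such that for all a, b > 0: h₁(ab) = a^λ h₁(b) + b^λ h₁(a), and for each 2 ≤ r ≤ k: h_r(ab) = a^λ h_r(b) + b^λ h_r(a) + Σ_{j=1}^{r−1} C_{r,j} h_{r−j}(a) b^λ (log b)^j. Then for each r ∈ {1,…,k} there exist constants A_{r,1}, …, A_{r,r} ∈ ℂ such that h_r(a) = a^λ Σ_{j=1}^{r} A_{r,j} (log a)^j for all a > 0. -/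
open Finset

/-- if `h₁, …, h_k : (0,∞) → ℂ` are differentiable,
`h₁(ab) = a^λ h₁(b) + b^λ h₁(a)`, and for `2 ≤ r ≤ k`
`h_r(ab) = a^λ h_r(b) + b^λ h_r(a) + ∑_{j=1}^{r−1} C_{r,j} h_{r−j}(a) b^λ (log b)^j`,
then each `h_r(a) = a^λ ∑_{j=1}^{r} A_{r,j} (log a)^j` on `(0,∞)`. -/
theorem stmt_11 (lam : ℂ) (k : ℕ) (hk : 1 ≤ k) (h : ℕ → ℝ → ℂ) (C : ℕ → ℕ → ℂ)
    (hdiff : ∀ r, 1 ≤ r → r ≤ k → ∀ a : ℝ, 0 < a → DifferentiableAt ℝ (h r) a)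
    (h1 : ∀ a b : ℝ, 0 < a → 0 < b →
      h 1 (a * b) = (a : ℂ) ^ lam * h 1 b + (b : ℂ) ^ lam * h 1 a)
    (hr : ∀ r, 2 ≤ r → r ≤ k → ∀ a b : ℝ, 0 < a → 0 < b →
      h r (a * b) = (a : ℂ) ^ lam * h r b + (b : ℂ) ^ lam * h r a
        + ∑ j ∈ Finset.Icc 1 (r - 1),
            C r j * h (r - j) a * (b : ℂ) ^ lam * (Real.log b : ℂ) ^ j) :
    ∀ r, 1 ≤ r → r ≤ k → ∃ A : ℕ → ℂ, ∀ a : ℝ, 0 < a →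
      h r a = (a : ℂ) ^ lam * ∑ j ∈ Finset.Icc 1 r, A j * (Real.log a : ℂ) ^ j := by
  -- cpow of a positive real
  have cpow_pos : ∀ a : ℝ, 0 < a → ((a : ℝ) : ℂ) ^ lam = Complex.exp (lam * Real.log a) := by
    intro a ha
    rw [Complex.cpow_def_of_ne_zero (by exact_mod_cast ha.ne'),
      ← Complex.ofReal_log ha.le, mul_comm]
  have cpow_exp : ∀ x : ℝ, ((Real.exp x : ℝ) : ℂ) ^ lam = Complex.exp (lam * x) := by
    intro x
    rw [cpow_pos _ (Real.exp_pos x), Real.log_exp]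
  set g : ℕ → ℝ → ℂ := fun r x => h r (Real.exp x) * Complex.exp (-(lam * x)) with hgdef
  -- differentiability of g r
  have hgdiff : ∀ r, 1 ≤ r → r ≤ k → Differentiable ℝ (g r) := by
    intro r h1r hrk x
    have hA : DifferentiableAt ℝ (fun x : ℝ => h r (Real.exp x)) x :=
      (hdiff r h1r hrk (Real.exp x) (Real.exp_pos x)).comp x (Real.differentiable_exp x)
    have hB : DifferentiableAt ℝ (fun x : ℝ => Complex.exp (-(lam * x))) x := by
      apply DifferentiableAt.cexp
      exact ((Complex.ofRealCLM.differentiable.const_mul lam) x).neg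
    exact hA.mul hB
  -- functional equation for g
  have hFE : ∀ r, 1 ≤ r → r ≤ k → ∀ x y : ℝ, g r (x + y) =
      g r x + g r y + ∑ j ∈ Finset.Icc 1 (r - 1), C r j * g (r - j) x * ((y : ℝ) : ℂ) ^ j := by
    intro r h1r hrk x y
    by_cases h2r : 2 ≤ r
    · have key := hr r h2r hrk (Real.exp x) (Real.exp y) (Real.exp_pos x) (Real.exp_pos y)
      simp only [hgdef]
      rw [Real.exp_add, key, cpow_exp, cpow_exp, Real.log_exp]
      simp only [Complex.exp_neg, Complex.ofReal_add, mul_add, Complex.exp_add]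
      rw [add_mul, add_mul, Finset.sum_mul]
      have hsum : ∀ j ∈ Finset.Icc 1 (r - 1),
          C r j * h (r - j) (Real.exp x) * Complex.exp (lam * y) * (y : ℂ) ^ j *
            (Complex.exp (lam * x) * Complex.exp (lam * y))⁻¹
          = C r j * (h (r - j) (Real.exp x) * (Complex.exp (lam * x))⁻¹) * (y : ℂ) ^ j := by
        intro j hj
        field_simp
      rw [Finset.sum_congr rfl hsum]
      congr 1
      field_simp
      ring
    · have hr1 : r = 1 := by omega
      subst hr1
      have key := h1 (Real.exp x) (Real.exp y) (Real.exp_pos x) (Real.exp_pos y)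
      simp only [hgdef]
      rw [Real.exp_add, key, cpow_exp, cpow_exp]
      simp only [Complex.exp_neg, Complex.ofReal_add, mul_add, Complex.exp_add]
      simp only [Nat.sub_self, Finset.Icc_eq_empty_of_lt (by norm_num : (1:ℕ) > 0),
        Finset.sum_empty, add_zero]
      field_simp
      ring
  -- value at 0
  have hg0 : ∀ r, 1 ≤ r → r ≤ k → g r 0 = 0 := by
    intro r h1r hrk
    have key := hFE r h1r hrk 0 0
    have hs : ∑ j ∈ Finset.Icc 1 (r - 1), C r j * g (r - j) 0 * ((0 : ℝ) : ℂ) ^ j = 0 := by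
      apply Finset.sum_eq_zero
      intro j hj
      have hj1 : 1 ≤ j := (Finset.mem_Icc.mp hj).1
      rw [Complex.ofReal_zero, zero_pow (by omega), mul_zero]
    rw [add_zero, hs] at key
    linear_combination -key
  -- derivative relation
  have hderiv : ∀ r, 1 ≤ r → r ≤ k → ∀ x : ℝ,
      deriv (g r) x = deriv (g r) 0 +
        ∑ j ∈ Finset.Icc 1 (r - 1), C r j * g (r - j) x * ((j : ℂ) * (0 : ℂ) ^ (j - 1)) := by
    intro r h1r hrk x
    have hgd := hgdiff r h1r hrk
    have hF1 : HasDerivAt (fun y : ℝ => g r (x + y)) (deriv (g r) x) 0 := by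
      have h1' : HasDerivAt (g r) (deriv (g r) (x + 0)) (x + 0) := (hgd (x + 0)).hasDerivAt
      simpa using h1'.comp_const_add x 0
    have hF2 : HasDerivAt
        (fun y : ℝ => g r x + g r y +
          ∑ j ∈ Finset.Icc 1 (r - 1), C r j * g (r - j) x * ((y : ℝ) : ℂ) ^ j)
        (deriv (g r) 0 +
          ∑ j ∈ Finset.Icc 1 (r - 1), C r j * g (r - j) x * ((j : ℂ) * (0 : ℂ) ^ (j - 1))) 0 := by
      apply HasDerivAt.add
      · exact ((hgd 0).hasDerivAt).const_add (g r x)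
      · apply HasDerivAt.fun_sum
        intro j hj
        have hpow : HasDerivAt (fun y : ℝ => ((y : ℝ) : ℂ) ^ j) ((j : ℂ) * (0 : ℂ) ^ (j - 1)) 0 := by
          simpa using (hasDerivAt_pow j (((0:ℝ) : ℂ))).comp_ofReal
        exact hpow.const_mul _
    have heq : (fun y : ℝ => g r (x + y)) =
        (fun y : ℝ => g r x + g r y +
          ∑ j ∈ Finset.Icc 1 (r - 1), C r j * g (r - j) x * ((y : ℝ) : ℂ) ^ j) :=
      funext fun y => hFE r h1r hrk x y
    rw [heq] at hF1
    exact hF1.unique hF2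
  -- main claim for g
  have main : ∀ r, 1 ≤ r → r ≤ k → ∃ A : ℕ → ℂ, ∀ x : ℝ,
      g r x = ∑ j ∈ Finset.Icc 1 r, A j * ((x : ℝ) : ℂ) ^ j := by
    intro r h1r
    induction r, h1r using Nat.le_induction with
    | base =>
      intro h1k
      refine ⟨fun _ => deriv (g 1) 0, fun x => ?_⟩
      have hder : ∀ y : ℝ, deriv (g 1) y = deriv (g 1) 0 := by
        intro y
        have := hderiv 1 le_rfl h1k y
        simpa using this
      set c : ℂ := deriv (g 1) 0 with hc
      have hf : ∀ y : ℝ, HasDerivAt (fun y : ℝ => g 1 y - c * (y : ℂ)) 0 y := by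
        intro y
        have hq : HasDerivAt (fun y : ℝ => c * ((y : ℝ) : ℂ)) c y := by
          simpa using ((hasDerivAt_id (((y:ℝ) : ℂ))).comp_ofReal).const_mul c
        have := ((hgdiff 1 le_rfl h1k y).hasDerivAt).sub hq
        rw [hder y] at this
        exact this.congr_deriv (by simp)
      have := is_const_of_deriv_eq_zero (fun y => (hf y).differentiableAt)
        (fun y => (hf y).deriv) x 0
      simp only [Complex.ofReal_zero, mul_zero, sub_zero] at this
      rw [hg0 1 le_rfl h1k] at this
      simp only [Finset.Icc_self, Finset.sum_singleton, pow_one]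
      have h0 : g 1 x - c * (x : ℂ) = 0 := by simpa using this
      linear_combination h0
    | succ n hn ih =>
      intro hnk
      obtain ⟨A, hA⟩ := ih (by omega)
      have hder : ∀ x : ℝ, deriv (g (n + 1)) x = deriv (g (n + 1)) 0 + C (n + 1) 1 * g n x := by
        intro x
        have key := hderiv (n + 1) (by omega) hnk x
        have hs : ∑ j ∈ Finset.Icc 1 (n + 1 - 1),
            C (n + 1) j * g (n + 1 - j) x * ((j : ℂ) * (0 : ℂ) ^ (j - 1))
            = C (n + 1) 1 * g n x := by
          rw [show n + 1 - 1 = n from rfl]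
          rw [Finset.sum_eq_single 1]
          · simp
          · intro j hj hj1
            have hj2 : 2 ≤ j := by
              have := (Finset.mem_Icc.mp hj).1; omega
            rw [zero_pow (by omega : j - 1 ≠ 0), mul_zero, mul_zero]
          · intro habs
            exact absurd (Finset.mem_Icc.mpr ⟨le_rfl, hn⟩) habs
        rw [hs] at key
        exact key
      set c0 : ℂ := deriv (g (n + 1)) 0 with hc0
      set c1 : ℂ := C (n + 1) 1 with hc1
      set A' : ℕ → ℂ := fun j => if j = 1 then c0 else c1 * A (j - 1) / j with hA'
      refine ⟨A', fun x => ?_⟩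
      set Q : ℝ → ℂ := fun x => ∑ j ∈ Finset.Icc 1 (n + 1), A' j * ((x : ℝ) : ℂ) ^ j with hQ
      have hQder : ∀ x : ℝ, HasDerivAt Q (c0 + c1 * ∑ j ∈ Finset.Icc 1 n, A j * ((x:ℝ):ℂ) ^ j) x := by
        intro x
        have hd : HasDerivAt Q (∑ j ∈ Finset.Icc 1 (n + 1), A' j * ((j : ℂ) * ((x:ℝ):ℂ) ^ (j - 1))) x := by
          apply HasDerivAt.fun_sum
          intro j hj
          have hpow : HasDerivAt (fun y : ℝ => ((y : ℝ) : ℂ) ^ j) ((j : ℂ) * ((x:ℝ):ℂ) ^ (j - 1)) x := by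
            exact (hasDerivAt_pow j (((x:ℝ) : ℂ))).comp_ofReal
          exact hpow.const_mul _
        have hval : ∑ j ∈ Finset.Icc 1 (n + 1), A' j * ((j : ℂ) * ((x:ℝ):ℂ) ^ (j - 1))
            = c0 + c1 * ∑ j ∈ Finset.Icc 1 n, A j * ((x:ℝ):ℂ) ^ j := by
          have hsplit : Finset.Icc 1 (n + 1) = insert 1 (Finset.Icc 2 (n + 1)) := by
            ext m; simp only [Finset.mem_Icc, Finset.mem_insert]; omega
          rw [hsplit, Finset.sum_insert (by simp)]
          have h1term : A' 1 * (((1:ℕ) : ℂ) * ((x:ℝ):ℂ) ^ (1 - 1)) = c0 := by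
            simp [hA']
          rw [h1term]
          congr 1
          have hmap : Finset.Icc 2 (n + 1) =
              Finset.map (addRightEmbedding 1) (Finset.Icc 1 n) := by
            rw [Finset.map_add_right_Icc]
          rw [hmap, Finset.sum_map, Finset.mul_sum]
          apply Finset.sum_congr rfl
          intro i hi
          have hi1 : 1 ≤ i := (Finset.mem_Icc.mp hi).1
          have hine : (addRightEmbedding 1) i = i + 1 := rfl
          rw [hine]
          have hA'i : A' (i + 1) = c1 * A i / (i + 1) := by
            simp only [hA']
            rw [if_neg (by omega)]
            simp
          rw [hA'i, show i + 1 - 1 = i from rfl]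
          have hne : ((i : ℂ) + 1) ≠ 0 := by
            have : ((i + 1 : ℕ) : ℂ) ≠ 0 := Nat.cast_ne_zero.mpr (by omega)
            push_cast at this
            exact this
          push_cast
          field_simp
        rw [hval] at hd
        exact hd
      have hf : ∀ y : ℝ, HasDerivAt (fun y : ℝ => g (n + 1) y - Q y) 0 y := by
        intro y
        have hgd := (hgdiff (n + 1) (by omega) hnk y).hasDerivAt
        have := hgd.sub (hQder y)
        rw [hder y] at this
        have hAy := hA y
        rw [← hAy] at this
        exact this.congr_deriv (by simp)
      have hconst := is_const_of_deriv_eq_zero (fun y => (hf y).differentiableAt)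
        (fun y => (hf y).deriv) x 0
      have hQ0 : Q 0 = 0 := by
        apply Finset.sum_eq_zero
        intro j hj
        have hj1 : 1 ≤ j := (Finset.mem_Icc.mp hj).1
        rw [Complex.ofReal_zero, zero_pow (by omega), mul_zero]
      rw [hg0 (n + 1) (by omega) hnk, hQ0, sub_zero] at hconst
      have : g (n + 1) x - Q x = 0 := by simpa using hconst
      have : g (n + 1) x = Q x := by linear_combination this
      exact this
  -- assemble
  intro r h1r hrk
  obtain ⟨A, hA⟩ := main r h1r hrk
  refine ⟨A, fun a ha => ?_⟩
  have hga : g r (Real.log a) = h r a * Complex.exp (-(lam * Real.log a)) := by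
    simp only [hgdef, Real.exp_log ha]
  have := hA (Real.log a)
  rw [hga] at this
  rw [cpow_pos a ha]
  have hne : Complex.exp (-(lam * Real.log a)) ≠ 0 := Complex.exp_ne_zero _
  have hexp : Complex.exp (lam * Real.log a) * Complex.exp (-(lam * Real.log a)) = 1 := by
    rw [← Complex.exp_add]; simp
  calc h r a = Complex.exp (lam * Real.log a) *
        (h r a * Complex.exp (-(lam * Real.log a))) := by
        rw [← mul_assoc, mul_comm (Complex.exp _) (h r a), mul_assoc, hexp, mul_one]
    _ = Complex.exp (lam * Real.log a) * ∑ j ∈ Finset.Icc 1 r, A j * (Real.log a : ℂ) ^ j := by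
        rw [this]
end
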